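/- Let (Ω, μ) be a probability space, let 𝒳 be a measurable space, let X : Ω → 𝒳 be measurable, let C : Ω → ℝ be integrable with 0 ≤ C ≤ 1 almost surely, and let g, f⋆ : 𝒳 → ℝ be measurable with values in [0,1]. Let q : 𝒳 → {0,1} be measurable and set Q = q ∘ X. Assume realizability: the conditional expectation of C given the σ-algebra generated by X equals f⋆ ∘ X almost surely. Define the excess-square-loss random variable M = Q · ((g(X) − C)² − (f⋆(X) − C)²). Then (i) E[M] = E[Q · (g(X) − f⋆(X))²], and (ii) Var[M] ≤ E[M²] ≤ 4 E[M] = 4 E[Q · (g(X) − f⋆(X))²]. -/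

import Mathlib

open MeasureTheory

/-- Lemma `lem:regret_transform`: mean and variance of the
excess square loss.  On a probability space `(Ω, μ)`, let `X : Ω → 𝒳` be
measurable, `C : Ω → ℝ` integrable with `0 ≤ C ≤ 1` a.s., `g, f⋆ : 𝒳 → ℝ`
measurable with values in `[0,1]`, and `q : 𝒳 → {0,1}` measurable, with
`Q = q ∘ X`.  Assume realizability: `f⋆ ∘ X` is a version of the conditional
expectation of `C` given `σ(X)`.  With
`M = Q * ((g(X) - C)² - (f⋆(X) - C)²)` we have
`E[M] = E[Q (g(X) - f⋆(X))²]`, `Var[M] ≤ E[M²] ≤ 4 E[M]`, and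
`4 E[M] = 4 E[Q (g(X) - f⋆(X))²]`. -/
theorem stmt_4 {Ω 𝒳 : Type*} [MeasurableSpace Ω] [MeasurableSpace 𝒳]
    (μ : Measure Ω) [IsProbabilityMeasure μ]
    (X : Ω → 𝒳) (hX : Measurable X)
    (C : Ω → ℝ) (hC : Integrable C μ)
    (hC01 : ∀ᵐ ω ∂μ, C ω ∈ Set.Icc (0 : ℝ) 1)
    (g fstar : 𝒳 → ℝ) (hg : Measurable g) (hfstar : Measurable fstar)
    (hg01 : ∀ x, g x ∈ Set.Icc (0 : ℝ) 1)
    (hfstar01 : ∀ x, fstar x ∈ Set.Icc (0 : ℝ) 1)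
    (q : 𝒳 → ℝ) (hq : Measurable q) (hq01 : ∀ x, q x = 0 ∨ q x = 1)
    (hrealizable :
      (fun ω => fstar (X ω)) =ᵐ[μ] μ[C | MeasurableSpace.comap X inferInstance])
    (M : Ω → ℝ)
    (hM : ∀ ω, M ω = q (X ω) * ((g (X ω) - C ω) ^ 2 - (fstar (X ω) - C ω) ^ 2)) :
    (∫ ω, M ω ∂μ = ∫ ω, q (X ω) * (g (X ω) - fstar (X ω)) ^ 2 ∂μ) ∧
    ProbabilityTheory.variance M μ ≤ ∫ ω, (M ω) ^ 2 ∂μ ∧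
    (∫ ω, (M ω) ^ 2 ∂μ ≤ 4 * ∫ ω, M ω ∂μ) ∧
    4 * ∫ ω, M ω ∂μ = 4 * ∫ ω, q (X ω) * (g (X ω) - fstar (X ω)) ^ 2 ∂μ := by
  have hm : MeasurableSpace.comap X inferInstance ≤ ‹MeasurableSpace Ω› := hX.comap_le
  have hXm : Measurable[MeasurableSpace.comap X inferInstance] X :=
    Measurable.of_comap_le le_rfl
  -- the σ(X)-measurable factor
  set φ : Ω → ℝ := fun ω => q (X ω) * (g (X ω) - fstar (X ω)) with hφdef
  have hφm : Measurable[MeasurableSpace.comap X inferInstance] φ :=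
    (hq.comp hXm).mul ((hg.comp hXm).sub (hfstar.comp hXm))
  have hφ : Measurable φ := hφm.mono hm le_rfl
  have hgfabs : ∀ x, |g x - fstar x| ≤ 1 := by
    intro x
    have h1 := hg01 x; have h2 := hfstar01 x
    simp only [Set.mem_Icc] at h1 h2
    rw [abs_sub_le_iff]
    constructor <;> linarith
  have hφbdd : ∀ ω, ‖φ ω‖ ≤ 1 := by
    intro ω
    rcases hq01 (X ω) with h | h <;>
      simp [hφdef, h, Real.norm_eq_abs, hgfabs (X ω)]
  -- generic integrability of bounded measurable functions
  have int_bdd : ∀ (h : Ω → ℝ) (c : ℝ), Measurable h → (∀ ω, ‖h ω‖ ≤ c) →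
      Integrable h μ := by
    intro h c hh hb
    exact (integrable_const c).mono' hh.aestronglyMeasurable (ae_of_all _ hb)
  -- the product φ · C
  set ψ : Ω → ℝ := fun ω => φ ω * C ω with hψdef
  have hψ : Integrable ψ μ := hC.bdd_mul hφ.aestronglyMeasurable (ae_of_all _ hφbdd)
  have hψ' : Integrable (φ * C) μ := hψ
  -- key conditional expectation computation
  have hcond : μ[φ * C | MeasurableSpace.comap X inferInstance] =ᵐ[μ]
      φ * μ[C | MeasurableSpace.comap X inferInstance] :=
    condExp_mul_of_stronglyMeasurable_left hφm.stronglyMeasurable hψ' hC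
  have key : ∫ ω, φ ω * C ω ∂μ = ∫ ω, φ ω * fstar (X ω) ∂μ := by
    have h1 : ∫ ω, φ ω * C ω ∂μ =
        ∫ ω, (μ[φ * C | MeasurableSpace.comap X inferInstance]) ω ∂μ :=
      (integral_condExp hm).symm
    have h2 : ∫ ω, (μ[φ * C | MeasurableSpace.comap X inferInstance]) ω ∂μ =
        ∫ ω, φ ω * (μ[C | MeasurableSpace.comap X inferInstance]) ω ∂μ :=
      integral_congr_ae (hcond.mono fun ω h => by simpa using h)
    have h3 : ∫ ω, φ ω * (μ[C | MeasurableSpace.comap X inferInstance]) ω ∂μ =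
        ∫ ω, φ ω * fstar (X ω) ∂μ :=
      integral_congr_ae (hrealizable.mono fun ω h => by
        dsimp only at h ⊢; rw [h])
    rw [h1, h2, h3]
  -- pointwise decomposition of M
  have hMrep : M = fun ω => φ ω * (g (X ω) + fstar (X ω)) - 2 * ψ ω := by
    funext ω
    rw [hM ω]; simp only [hφdef, hψdef]; ring
  set A : Ω → ℝ := fun ω => φ ω * (g (X ω) + fstar (X ω)) with hAdef
  have hA : Integrable A μ := by
    refine int_bdd A 2 (hφ.mul ((hg.comp hX).add (hfstar.comp hX))) fun ω => ?_
    have h1 := hg01 (X ω); have h2 := hfstar01 (X ω)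
    simp only [Set.mem_Icc] at h1 h2
    have hb := hφbdd ω
    simp only [Real.norm_eq_abs] at hb ⊢
    rw [abs_mul]
    calc |φ ω| * |g (X ω) + fstar (X ω)| ≤ 1 * 2 := by
          apply mul_le_mul hb _ (abs_nonneg _) zero_le_one
          rw [abs_le]; constructor <;> linarith
      _ = 2 := by norm_num
  set B : Ω → ℝ := fun ω => φ ω * fstar (X ω) with hBdef
  have hB : Integrable B μ := by
    refine int_bdd B 1 (hφ.mul (hfstar.comp hX)) fun ω => ?_
    have h2 := hfstar01 (X ω)
    simp only [Set.mem_Icc] at h2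
    have hb := hφbdd ω
    simp only [Real.norm_eq_abs] at hb ⊢
    rw [abs_mul]
    calc |φ ω| * |fstar (X ω)| ≤ 1 * 1 := by
          apply mul_le_mul hb _ (abs_nonneg _) zero_le_one
          rw [abs_le]; constructor <;> linarith
      _ = 1 := by norm_num
  set R : Ω → ℝ := fun ω => q (X ω) * (g (X ω) - fstar (X ω)) ^ 2 with hRdef
  have hR : Integrable R μ := by
    refine int_bdd R 1
      ((hq.comp hX).mul (((hg.comp hX).sub (hfstar.comp hX)).pow_const 2))
      fun ω => ?_
    rcases hq01 (X ω) with h | h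
    · simp [hRdef, h]
    · simp only [hRdef, h, one_mul, Real.norm_eq_abs, abs_pow, sq_abs]
      rw [← sq_abs]
      exact pow_le_one₀ (abs_nonneg _) (hgfabs (X ω))
  -- part (i)
  have part1 : ∫ ω, M ω ∂μ = ∫ ω, R ω ∂μ := by
    rw [hMrep]
    rw [integral_sub hA (hψ.const_mul 2), integral_const_mul, key, ← integral_const_mul,
      ← integral_sub hA (hB.const_mul 2)]
    refine integral_congr_ae (ae_of_all _ fun ω => ?_)
    simp only [hAdef, hBdef, hRdef, hφdef]
    ring
  -- measurability / integrability of M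
  have hMint : Integrable M μ := hMrep ▸ (hA.sub (hψ.const_mul 2))
  have hMaesm : AEStronglyMeasurable M μ := hMint.aestronglyMeasurable
  -- pointwise a.e. bound for M²
  have hsqle : ∀ᵐ ω ∂μ, (M ω) ^ 2 ≤ 4 * R ω := by
    filter_upwards [hC01] with ω hCω
    simp only [Set.mem_Icc] at hCω
    rcases hq01 (X ω) with h | h
    · simp [hM ω, hRdef, h]
    · rw [hM ω]
      simp only [hRdef, h, one_mul]
      set a := g (X ω); set b := fstar (X ω); set c := C ω
      have h1 := hg01 (X ω); have h2 := hfstar01 (X ω)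
      simp only [Set.mem_Icc] at h1 h2
      have e : ((a - c) ^ 2 - (b - c) ^ 2) ^ 2 = (a - b) ^ 2 * (a + b - 2 * c) ^ 2 := by
        ring
      have h4 : (a + b - 2 * c) ^ 2 ≤ 4 := by
        nlinarith [h1.1, h1.2, h2.1, h2.2, hCω.1, hCω.2]
      rw [e]
      nlinarith [sq_nonneg (a - b)]
  have hM2aesm : AEStronglyMeasurable (fun ω => (M ω) ^ 2) μ :=
    (hMaesm.mul hMaesm).congr (ae_of_all _ fun ω => (pow_two (M ω)).symm)
  have hM2int : Integrable (fun ω => (M ω) ^ 2) μ := by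
    refine Integrable.mono' (hR.const_mul 4) hM2aesm ?_
    filter_upwards [hsqle] with ω hω
    simp only [Real.norm_eq_abs]
    rwa [abs_of_nonneg (sq_nonneg _)]
  -- variance bound
  have part2 : ProbabilityTheory.variance M μ ≤ ∫ ω, (M ω) ^ 2 ∂μ := by
    have := ProbabilityTheory.variance_le_expectation_sq (μ := μ) hMaesm
    simpa using this
  -- part (iii)
  have part3 : ∫ ω, (M ω) ^ 2 ∂μ ≤ 4 * ∫ ω, M ω ∂μ := by
    calc ∫ ω, (M ω) ^ 2 ∂μ ≤ ∫ ω, 4 * R ω ∂μ :=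
          integral_mono_ae hM2int (hR.const_mul 4) hsqle
      _ = 4 * ∫ ω, R ω ∂μ := integral_const_mul 4 R
      _ = 4 * ∫ ω, M ω ∂μ := by rw [part1]
  exact ⟨part1, part2, part3, by rw [part1]⟩
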